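/- Theorem 3, exact expert update of A2D (finite belief-MDP form): let d be a pmf on B with d(b) > 0 for every b ∈ B, and let K be a set of policies containing at least one optimal policy. If κ* ∈ K satisfies ∑_b d(b)·∑_a κ*(a|b)·Q^{κ*}(a,b) ≥ ∑_b d(b)·∑_a κ(a|b)·Q^{κ}(a,b) for every κ ∈ K (i.e. κ* maximizes the expected Q-value objective over K), then κ* is optimal: V^{κ*}(b) = V*(b) for all b ∈ B. -/

import Mathlib

open scoped BigOperators Classical

noncomputable section

/-- A probability mass function on a finite type. -/
def IsPmf {X : Type*} [Fintype X] (p : X → ℝ) : Prop :=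
  (∀ x, 0 ≤ p x) ∧ ∑ x, p x = 1

/-- Time-`t` distribution of the chain on belief states started at `b₀`, following
policy `κ` with transition kernel `p`. -/
def chain {B A : Type*} [Fintype B] [Fintype A]
    (p : B → A → B → ℝ) (κ : B → A → ℝ) (b₀ : B) : ℕ → B → ℝ
  | 0 => fun b => if b = b₀ then 1 else 0
  | t + 1 => fun b'' => ∑ b' : B, ∑ a : A, chain p κ b₀ t b' * κ b' a * p b' a b''

/-- Value function `V^κ(b₀) = ∑_t γ^t·E[r(b_t,a_t,b_{t+1})]` of the chain started
at `b₀`. -/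
def Vval {B A : Type*} [Fintype B] [Fintype A]
    (γ : ℝ) (p : B → A → B → ℝ) (r : B → A → B → ℝ)
    (κ : B → A → ℝ) (b₀ : B) : ℝ :=
  ∑' t : ℕ, γ ^ t * ∑ b : B, ∑ a : A, ∑ b' : B,
    chain p κ b₀ t b * κ b a * p b a b' * r b a b'

/-- Q-function `Q^κ(a,b) = ∑_{b'} p(b'|b,a)·(r(b,a,b') + γ·V^κ(b'))`. -/
def Qval {B A : Type*} [Fintype B] [Fintype A]
    (γ : ℝ) (p : B → A → B → ℝ) (r : B → A → B → ℝ)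
    (κ : B → A → ℝ) (a : A) (b : B) : ℝ :=
  ∑ b' : B, p b a b' * (r b a b' + γ * Vval γ p r κ b')

/-- Optimal value function `V*(b) = ⨆_κ V^κ(b)` over all policies. -/
def Vstar {B A : Type*} [Fintype B] [Fintype A]
    (γ : ℝ) (p : B → A → B → ℝ) (r : B → A → B → ℝ) (b : B) : ℝ :=
  ⨆ κ : {κ : B → A → ℝ // ∀ b', IsPmf (κ b')}, Vval γ p r κ.1 b

/-! ### Auxiliary lemmas -/

section A2DAux

variable {B A : Type*} [Fintype B] [Fintype A]

/-- The expected one-step reward at time `t`. -/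
def frew (p r : B → A → B → ℝ) (κ : B → A → ℝ) (b₀ : B) (t : ℕ) : ℝ :=
  ∑ b : B, ∑ a : A, ∑ b' : B, chain p κ b₀ t b * κ b a * p b a b' * r b a b'

lemma a2d_Vval_eq_tsum (γ : ℝ) (p r : B → A → B → ℝ) (κ : B → A → ℝ) (b₀ : B) :
    Vval γ p r κ b₀ = ∑' t : ℕ, γ ^ t * frew p r κ b₀ t := rfl

lemma a2d_chain_nonneg (p : B → A → B → ℝ) (hp : ∀ b a, IsPmf (p b a))
    (κ : B → A → ℝ) (hκ : ∀ b, IsPmf (κ b)) (b₀ : B) :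
    ∀ t b, 0 ≤ chain p κ b₀ t b := by
  intro t
  induction t with
  | zero => intro b; simp only [chain]; split_ifs <;> norm_num
  | succ t ih =>
    intro b
    exact Finset.sum_nonneg fun b' _ => Finset.sum_nonneg fun a _ =>
      mul_nonneg (mul_nonneg (ih b') ((hκ b').1 a)) ((hp b' a).1 b)

lemma a2d_chain_sum_one (p : B → A → B → ℝ) (hp : ∀ b a, IsPmf (p b a))
    (κ : B → A → ℝ) (hκ : ∀ b, IsPmf (κ b)) (b₀ : B) :
    ∀ t, ∑ b, chain p κ b₀ t b = 1 := by
  intro t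
  induction t with
  | zero => simp [chain]
  | succ t ih =>
    simp only [chain]
    rw [Finset.sum_comm]
    have : ∀ b' : B, ∑ b'' : B, ∑ a : A, chain p κ b₀ t b' * κ b' a * p b' a b''
        = chain p κ b₀ t b' := by
      intro b'
      rw [Finset.sum_comm]
      have h1 : ∀ a : A, ∑ b'' : B, chain p κ b₀ t b' * κ b' a * p b' a b''
          = chain p κ b₀ t b' * κ b' a := by
        intro a; rw [← Finset.mul_sum, (hp b' a).2, mul_one]
      simp only [h1]
      rw [← Finset.mul_sum, (hκ b').2, mul_one]
    simp only [this, ih]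

lemma a2d_triple_sum_one (p : B → A → B → ℝ) (hp : ∀ b a, IsPmf (p b a))
    (κ : B → A → ℝ) (hκ : ∀ b, IsPmf (κ b)) (b₀ : B) (t : ℕ) :
    ∑ b : B, ∑ a : A, ∑ b' : B, chain p κ b₀ t b * κ b a * p b a b' = 1 := by
  have h1 : ∀ (b : B) (a : A), ∑ b' : B, chain p κ b₀ t b * κ b a * p b a b'
      = chain p κ b₀ t b * κ b a := by
    intro b a; rw [← Finset.mul_sum, (hp b a).2, mul_one]
  simp only [h1]
  have h2 : ∀ b : B, ∑ a : A, chain p κ b₀ t b * κ b a = chain p κ b₀ t b := by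
    intro b; rw [← Finset.mul_sum, (hκ b).2, mul_one]
  simp only [h2, a2d_chain_sum_one p hp κ hκ b₀ t]

lemma a2d_frew_abs_le (p : B → A → B → ℝ) (hp : ∀ b a, IsPmf (p b a))
    (r : B → A → B → ℝ) (κ : B → A → ℝ) (hκ : ∀ b, IsPmf (κ b)) (b₀ : B) (t : ℕ)
    (M : ℝ) (hM : ∀ b a b', |r b a b'| ≤ M) :
    |frew p r κ b₀ t| ≤ M := by
  have key : ∑ b : B, ∑ a : A, ∑ b' : B, chain p κ b₀ t b * κ b a * p b a b' * M = M := by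
    simp only [← Finset.sum_mul, a2d_triple_sum_one p hp κ hκ b₀ t, one_mul]
  calc |frew p r κ b₀ t|
      ≤ ∑ b : B, ∑ a : A, ∑ b' : B, |chain p κ b₀ t b * κ b a * p b a b' * r b a b'| := by
        refine (Finset.abs_sum_le_sum_abs _ _).trans ?_
        refine Finset.sum_le_sum fun b _ => ?_
        refine (Finset.abs_sum_le_sum_abs _ _).trans ?_
        exact Finset.sum_le_sum fun a _ => Finset.abs_sum_le_sum_abs _ _
    _ ≤ ∑ b : B, ∑ a : A, ∑ b' : B, chain p κ b₀ t b * κ b a * p b a b' * M := by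
        refine Finset.sum_le_sum fun b _ => Finset.sum_le_sum fun a _ =>
          Finset.sum_le_sum fun b' _ => ?_
        have hnn : 0 ≤ chain p κ b₀ t b * κ b a * p b a b' :=
          mul_nonneg (mul_nonneg (a2d_chain_nonneg p hp κ hκ b₀ t b) ((hκ b).1 a))
            ((hp b a).1 b')
        rw [abs_mul, abs_of_nonneg hnn]
        exact mul_le_mul_of_nonneg_left (hM b a b') hnn
    _ = M := key

lemma a2d_summable_geo_mul {γ M : ℝ} (hγ0 : 0 ≤ γ) (hγ1 : γ < 1) (f : ℕ → ℝ)
    (hf : ∀ t, |f t| ≤ M) : Summable (fun t => γ ^ t * f t) := by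
  refine Summable.of_norm_bounded
    ((summable_geometric_of_lt_one hγ0 hγ1).mul_left M) fun t => ?_
  rw [Real.norm_eq_abs, abs_mul, abs_pow, abs_of_nonneg hγ0, mul_comm]
  exact mul_le_mul_of_nonneg_right (hf t) (pow_nonneg hγ0 t)

lemma a2d_summable_frew {γ : ℝ} (hγ0 : 0 ≤ γ) (hγ1 : γ < 1)
    (p : B → A → B → ℝ) (hp : ∀ b a, IsPmf (p b a))
    (r : B → A → B → ℝ) (κ : B → A → ℝ) (hκ : ∀ b, IsPmf (κ b)) (b₀ : B)
    {M : ℝ} (hM : ∀ b a b', |r b a b'| ≤ M) :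
    Summable (fun t => γ ^ t * frew p r κ b₀ t) :=
  a2d_summable_geo_mul hγ0 hγ1 _ fun t => a2d_frew_abs_le p hp r κ hκ b₀ t M hM

lemma a2d_Vval_le {γ : ℝ} (hγ0 : 0 ≤ γ) (hγ1 : γ < 1)
    (p : B → A → B → ℝ) (hp : ∀ b a, IsPmf (p b a))
    (r : B → A → B → ℝ) (κ : B → A → ℝ) (hκ : ∀ b, IsPmf (κ b)) (b₀ : B)
    {M : ℝ} (hM : ∀ b a b', |r b a b'| ≤ M) :
    Vval γ p r κ b₀ ≤ M / (1 - γ) := by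
  rw [a2d_Vval_eq_tsum]
  have hg : Summable (fun t : ℕ => M * γ ^ t) :=
    (summable_geometric_of_lt_one hγ0 hγ1).mul_left M
  have hs := a2d_summable_frew hγ0 hγ1 p hp r κ hκ b₀ hM
  have hle := Summable.tsum_le_tsum (f := fun t => γ ^ t * frew p r κ b₀ t)
    (g := fun t : ℕ => M * γ ^ t)
    (fun t => by
      show γ ^ t * frew p r κ b₀ t ≤ M * γ ^ t
      rw [mul_comm M]
      exact mul_le_mul_of_nonneg_left
        ((le_abs_self _).trans (a2d_frew_abs_le p hp r κ hκ b₀ t M hM))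
        (pow_nonneg hγ0 t))
    hs hg
  refine hle.trans ?_
  rw [tsum_mul_left, tsum_geometric_of_lt_one hγ0 hγ1, div_eq_mul_inv]

lemma a2d_exists_bound [Nonempty B] [Nonempty A] (r : B → A → B → ℝ) :
    ∃ M : ℝ, 0 ≤ M ∧ ∀ b a b', |r b a b'| ≤ M := by
  obtain ⟨M, hM⟩ := Finite.exists_le (fun x : B × A × B => |r x.1 x.2.1 x.2.2|)
  exact ⟨max M 0, le_max_right _ _, fun b a b' =>
    le_trans (hM (b, a, b')) (le_max_left _ _)⟩

/-- swap a block of two outer sums with a block of two inner sums -/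
lemma a2d_sum22 (f : B → A → A → B → ℝ) :
    ∑ b' : B, ∑ a' : A, ∑ a : A, ∑ b₁ : B, f b' a' a b₁
      = ∑ a : A, ∑ b₁ : B, ∑ b' : B, ∑ a' : A, f b' a' a b₁ := by
  calc ∑ b' : B, ∑ a' : A, ∑ a : A, ∑ b₁ : B, f b' a' a b₁
      = ∑ x : B × A, ∑ y : A × B, f x.1 x.2 y.1 y.2 := by
        simp only [Fintype.sum_prod_type]
    _ = ∑ y : A × B, ∑ x : B × A, f x.1 x.2 y.1 y.2 := Finset.sum_comm
    _ = _ := by simp only [Fintype.sum_prod_type]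

/-- swap a block of three outer sums with a block of two inner sums -/
lemma a2d_sum32 (f : B → A → B → A → B → ℝ) :
    ∑ b : B, ∑ a' : A, ∑ b'' : B, ∑ a : A, ∑ b₁ : B, f b a' b'' a b₁
      = ∑ a : A, ∑ b₁ : B, ∑ b : B, ∑ a' : A, ∑ b'' : B, f b a' b'' a b₁ := by
  calc ∑ b : B, ∑ a' : A, ∑ b'' : B, ∑ a : A, ∑ b₁ : B, f b a' b'' a b₁
      = ∑ x : B × A × B, ∑ y : A × B, f x.1 x.2.1 x.2.2 y.1 y.2 := by
        simp only [Fintype.sum_prod_type]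
    _ = ∑ y : A × B, ∑ x : B × A × B, f x.1 x.2.1 x.2.2 y.1 y.2 := Finset.sum_comm
    _ = _ := by simp only [Fintype.sum_prod_type]

lemma a2d_chain_markov (p : B → A → B → ℝ) (κ : B → A → ℝ) (b₀ : B) :
    ∀ (t : ℕ) (b : B), chain p κ b₀ (t + 1) b
      = ∑ a : A, ∑ b₁ : B, κ b₀ a * p b₀ a b₁ * chain p κ b₁ t b := by
  intro t
  induction t with
  | zero =>
    intro b
    simp only [chain]
    rw [Finset.sum_eq_single b₀]
    · simp only
      refine Finset.sum_congr rfl fun a _ => ?_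
      rw [Finset.sum_eq_single b]
      · simp
      · intro b₁ _ hb₁; simp [Ne.symm hb₁]
      · intro h; exact absurd (Finset.mem_univ b) h
    · intro b' _ hb'; simp [hb']
    · intro h; exact absurd (Finset.mem_univ b₀) h
  | succ t ih =>
    intro b
    show ∑ b' : B, ∑ a' : A, chain p κ b₀ (t + 1) b' * κ b' a' * p b' a' b = _
    simp only [ih]
    simp only [Finset.sum_mul, Finset.mul_sum]
    rw [a2d_sum22 (fun b' a' a b₁ =>
      κ b₀ a * p b₀ a b₁ * chain p κ b₁ t b' * κ b' a' * p b' a' b)]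
    refine Finset.sum_congr rfl fun a _ => Finset.sum_congr rfl fun b₁ _ => ?_
    show _ = κ b₀ a * p b₀ a b₁ * ∑ b' : B, ∑ a' : A, chain p κ b₁ t b' * κ b' a' * p b' a' b
    simp only [Finset.mul_sum]
    exact Finset.sum_congr rfl fun b' _ => Finset.sum_congr rfl fun a' _ => by ring

lemma a2d_frew_succ (p r : B → A → B → ℝ) (κ : B → A → ℝ) (b₀ : B) (t : ℕ) :
    frew p r κ b₀ (t + 1)
      = ∑ a : A, ∑ b₁ : B, κ b₀ a * p b₀ a b₁ * frew p r κ b₁ t := by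
  simp only [frew, a2d_chain_markov p κ b₀ t]
  simp only [Finset.sum_mul, Finset.mul_sum]
  rw [a2d_sum32 (fun b a' b'' a b₁ =>
    κ b₀ a * p b₀ a b₁ * chain p κ b₁ t b * κ b a' * p b a' b'' * r b a' b'')]
  refine Finset.sum_congr rfl fun a _ => Finset.sum_congr rfl fun b₁ _ =>
    Finset.sum_congr rfl fun b _ => Finset.sum_congr rfl fun a' _ =>
    Finset.sum_congr rfl fun b'' _ => by ring

lemma a2d_frew_zero (p r : B → A → B → ℝ) (κ : B → A → ℝ) (b₀ : B) :
    frew p r κ b₀ 0 = ∑ a : A, ∑ b' : B, κ b₀ a * p b₀ a b' * r b₀ a b' := by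
  simp only [frew, chain]
  rw [Finset.sum_eq_single b₀]
  · simp
  · intro b _ hb; simp [hb]
  · intro h; exact absurd (Finset.mem_univ b₀) h

/-- The Bellman equation `V^κ(b) = ∑_a κ(a|b)·Q^κ(a,b)`. -/
lemma a2d_bellman [Nonempty B] [Nonempty A] {γ : ℝ} (hγ0 : 0 ≤ γ) (hγ1 : γ < 1)
    (p : B → A → B → ℝ) (hp : ∀ b a, IsPmf (p b a))
    (r : B → A → B → ℝ) (κ : B → A → ℝ) (hκ : ∀ b, IsPmf (κ b)) (b₀ : B) :
    Vval γ p r κ b₀ = ∑ a : A, κ b₀ a * Qval γ p r κ a b₀ := by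
  obtain ⟨M, _, hM⟩ := a2d_exists_bound r
  have hs : ∀ b₁ : B, Summable (fun t => γ ^ t * frew p r κ b₁ t) := fun b₁ =>
    a2d_summable_frew hγ0 hγ1 p hp r κ hκ b₁ hM
  have step : Vval γ p r κ b₀ = frew p r κ b₀ 0
      + ∑ a : A, ∑ b₁ : B, γ * (κ b₀ a * p b₀ a b₁) * Vval γ p r κ b₁ := by
    rw [a2d_Vval_eq_tsum, Summable.tsum_eq_zero_add (hs b₀), pow_zero, one_mul]
    congr 1
    have ht : ∀ t : ℕ, γ ^ (t + 1) * frew p r κ b₀ (t + 1)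
        = ∑ a : A, ∑ b₁ : B, γ * (κ b₀ a * p b₀ a b₁) * (γ ^ t * frew p r κ b₁ t) := by
      intro t
      rw [a2d_frew_succ]
      simp only [Finset.mul_sum]
      exact Finset.sum_congr rfl fun a _ => Finset.sum_congr rfl fun b₁ _ => by ring
    rw [tsum_congr ht,
      Summable.tsum_finsetSum (fun a _ => summable_sum fun b₁ _ => (hs b₁).mul_left _)]
    refine Finset.sum_congr rfl fun a _ => ?_
    rw [Summable.tsum_finsetSum (fun b₁ _ => (hs b₁).mul_left _)]
    refine Finset.sum_congr rfl fun b₁ _ => ?_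
    rw [tsum_mul_left, a2d_Vval_eq_tsum]
  rw [step, a2d_frew_zero]
  simp only [Qval, Finset.mul_sum, mul_add, Finset.sum_add_distrib]
  congr 1
  · exact Finset.sum_congr rfl fun a _ => Finset.sum_congr rfl fun b' _ => by ring
  · exact Finset.sum_congr rfl fun a _ => Finset.sum_congr rfl fun b' _ => by ring

end A2DAux

/-- Theorem 3 (exact expert update of A2D, finite belief-MDP form): if `d` is strictly
positive and `κ*` maximizes the expected Q-value objective over a set `K` of policies
containing at least one optimal policy, then `κ*` is optimal. -/
theorem a2d_exact_expert_update
    {B A : Type*} [Fintype B] [Fintype A] [Nonempty B] [Nonempty A]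
    (p : B → A → B → ℝ) (hp : ∀ b a, IsPmf (p b a))
    (r : B → A → B → ℝ)
    (γ : ℝ) (hγ0 : 0 ≤ γ) (hγ1 : γ < 1)
    (d : B → ℝ) (hd : IsPmf d) (hdpos : ∀ b, 0 < d b)
    (K : Set (B → A → ℝ)) (hK : ∀ κ ∈ K, ∀ b, IsPmf (κ b))
    (hKopt : ∃ κ ∈ K, ∀ b, Vval γ p r κ b = Vstar γ p r b)
    (κstar : B → A → ℝ) (hκstar : κstar ∈ K)
    (hmax : ∀ κ ∈ K,
      ∑ b, d b * ∑ a, κ b a * Qval γ p r κ a b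
        ≤ ∑ b, d b * ∑ a, κstar b a * Qval γ p r κstar a b) :
    ∀ b, Vval γ p r κstar b = Vstar γ p r b := by
  obtain ⟨M, hM0, hM⟩ := a2d_exists_bound r
  have hκs : ∀ b, IsPmf (κstar b) := hK κstar hκstar
  -- V^{κ*} ≤ V* pointwise
  have hle : ∀ b, Vval γ p r κstar b ≤ Vstar γ p r b := by
    intro b
    refine le_ciSup (f := fun κ : {κ : B → A → ℝ // ∀ b', IsPmf (κ b')} => Vval γ p r κ.1 b)
      ⟨M / (1 - γ), ?_⟩ ⟨κstar, hκs⟩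
    rintro x ⟨κ, rfl⟩
    exact a2d_Vval_le hγ0 hγ1 p hp r κ.1 κ.2 b hM
  obtain ⟨κo, hκoK, hκoV⟩ := hKopt
  have h1 := hmax κo hκoK
  have h1' : ∑ b, d b * Vstar γ p r b ≤ ∑ b, d b * Vval γ p r κstar b := by
    calc ∑ b, d b * Vstar γ p r b
        = ∑ b, d b * ∑ a, κo b a * Qval γ p r κo a b := by
          refine Finset.sum_congr rfl fun b _ => ?_
          rw [← hκoV b, a2d_bellman hγ0 hγ1 p hp r κo (hK κo hκoK) b]
      _ ≤ ∑ b, d b * ∑ a, κstar b a * Qval γ p r κstar a b := h1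
      _ = ∑ b, d b * Vval γ p r κstar b := by
          refine Finset.sum_congr rfl fun b _ => ?_
          rw [← a2d_bellman hγ0 hγ1 p hp r κstar hκs b]
  -- each term of ∑ d b * (Vstar - Vval κ*) is nonneg and the sum is ≤ 0
  have hzero : ∀ b ∈ Finset.univ, d b * (Vstar γ p r b - Vval γ p r κstar b) = 0 := by
    have hsum : ∑ b, d b * (Vstar γ p r b - Vval γ p r κstar b) = 0 := by
      have hle0 : ∑ b, d b * (Vstar γ p r b - Vval γ p r κstar b) ≤ 0 := by
        simp only [mul_sub, Finset.sum_sub_distrib]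
        exact sub_nonpos.mpr h1'
      have hge0 : 0 ≤ ∑ b, d b * (Vstar γ p r b - Vval γ p r κstar b) :=
        Finset.sum_nonneg fun b _ =>
          mul_nonneg (hdpos b).le (sub_nonneg.mpr (hle b))
      linarith
    exact (Finset.sum_eq_zero_iff_of_nonneg fun b _ =>
      mul_nonneg (hdpos b).le (sub_nonneg.mpr (hle b))).mp hsum
  intro b
  have := hzero b (Finset.mem_univ b)
  have hne : d b ≠ 0 := (hdpos b).ne'
  have : Vstar γ p r b - Vval γ p r κstar b = 0 := by
    rcases mul_eq_zero.mp this with h | h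
    · exact absurd h hne
    · exact h
  linarith
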